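/- Let T_{4,7} be the rooted tree in which the root has 4 children, every other non-leaf vertex has degree 4 (i.e., 3 children), and all leaves are at distance 6 from the root. Then for every positive integer k, the Thue chromatic number π(T_{4,7}[E_k]) = 4k. -/

import Mathlib

/-- The lexicographic product `G[H]` of two simple graphs. -/
def lexProd {V W : Type*} (G : SimpleGraph V) (H : SimpleGraph W) : SimpleGraph (V × W) where
  Adj x y := G.Adj x.1 y.1 ∨ (x.1 = y.1 ∧ H.Adj x.2 y.2)
  symm := by
    constructor
    rintro ⟨a, b⟩ ⟨a', b'⟩ (h | ⟨h1, h2⟩)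
    · exact Or.inl h.symm
    · exact Or.inr ⟨h1.symm, h2.symm⟩
  loopless := by
    constructor
    rintro ⟨a, b⟩ (h | ⟨_, h2⟩)
    · exact (G.ne_of_adj h) rfl
    · exact (H.ne_of_adj h2) rfl

/-- A coloring `c` of a graph `G` is nonrepetitive if there is no path
`v₁ v₂ … v_{2l}` (pairwise distinct vertices, consecutive ones adjacent) with
`c vᵢ = c v_{l+i}` for all `1 ≤ i ≤ l`. -/
def IsNonrepetitive {V α : Type*} (G : SimpleGraph V) (c : V → α) : Prop :=
  ∀ l : ℕ, 0 < l → ∀ f : ℕ → V,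
    (∀ i j, i < 2 * l → j < 2 * l → f i = f j → i = j) →
    (∀ i, i + 1 < 2 * l → G.Adj (f i) (f (i + 1))) →
    ¬ (∀ i, i < l → c (f i) = c (f (i + l)))

/-- The Thue chromatic number: least number of colors in a nonrepetitive coloring. -/
noncomputable def thueNumber {V : Type*} (G : SimpleGraph V) : ℕ :=
  sInf {n : ℕ | ∃ c : V → Fin n, IsNonrepetitive G c}

/-- The rainbow Thue chromatic number of `G[H]`: least number of colors in a
nonrepetitive coloring of `G[H]` in which every layer is rainbow colored. -/
noncomputable def rainbowThueNumber {V W : Type*} (G : SimpleGraph V) (H : SimpleGraph W) : ℕ :=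
  sInf {n : ℕ | ∃ c : V × W → Fin n, IsNonrepetitive (lexProd G H) c ∧
    ∀ v : V, Function.Injective fun w : W => c (v, w)}


namespace Stmt7Aux

open SimpleGraph

section tree
variable {V : Type*} {T : SimpleGraph V}

variable {V : Type*} {T : SimpleGraph V}

lemma dist_add_dist_le_of_mem [DecidableEq V] (hc : T.Connected) {x u v : V} (p : T.Walk x u)
    (hv : v ∈ p.support) : T.dist x v + T.dist v u ≤ p.length := by
  have h := congrArg Walk.length (p.take_spec hv)
  rw [Walk.length_append] at h
  have h1 : T.dist x v ≤ (p.takeUntil v hv).length := SimpleGraph.dist_le _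
  have h2 : T.dist v u ≤ (p.dropUntil v hv).length := SimpleGraph.dist_le _
  omega

lemma adj_dist_cases [DecidableEq V] (hT : T.IsTree) (x : V) {u v : V} (h : T.Adj u v) :
    T.dist x v = T.dist x u + 1 ∨ T.dist x u = T.dist x v + 1 := by
  have hc := hT.isConnected
  have hd1 : T.dist u v = 1 := (SimpleGraph.dist_eq_one_iff_adj).2 h
  have hd1' : T.dist v u = 1 := (SimpleGraph.dist_eq_one_iff_adj).2 h.symm
  have tri1 : T.dist x v ≤ T.dist x u + T.dist u v := hc.dist_triangle
  have tri2 : T.dist x u ≤ T.dist x v + T.dist v u := hc.dist_triangle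
  have hne : T.dist x u ≠ T.dist x v := by
    intro heq
    obtain ⟨p, hp, hlen⟩ := hc.exists_path_of_dist x u
    by_cases hv : v ∈ p.support
    · have h3 := dist_add_dist_le_of_mem hc p hv
      omega
    · have hp' : (Walk.cons h.symm p.reverse).IsPath := hp.reverse.cons (by simpa using hv)
      have hq : ((Walk.cons h.symm p.reverse).reverse).IsPath := hp'.reverse
      obtain ⟨q, hqp, hql⟩ := hc.exists_path_of_dist x v
      have huniq := hT.existsUnique_path x v
      have heqw : (Walk.cons h.symm p.reverse).reverse = q := huniq.unique hq hqp
      have hlen2 := congrArg Walk.length heqw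
      simp [Walk.length_reverse] at hlen2
      omega
  omega

lemma exists_closer_nbr (hc : T.Connected) {x v : V} (hne : x ≠ v) :
    ∃ y, T.Adj v y ∧ T.dist x y + 1 = T.dist x v := by
  obtain ⟨p, hlen⟩ := (hc v x).exists_walk_length_eq_dist
  cases p with
  | nil => exact absurd rfl hne.symm
  | @cons _ y _ h q =>
    refine ⟨y, h, ?_⟩
    have h1 : T.dist y x ≤ q.length := SimpleGraph.dist_le q
    have h2 : T.dist v x ≤ T.dist v y + T.dist y x := hc.dist_triangle
    have h3 : T.dist v y = 1 := (SimpleGraph.dist_eq_one_iff_adj).2 h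
    have h4 : T.dist x y = T.dist y x := SimpleGraph.dist_comm ..
    have h5 : T.dist x v = T.dist v x := SimpleGraph.dist_comm ..
    simp only [Walk.length_cons] at hlen
    omega

lemma closer_nbr_unique [DecidableEq V] (hT : T.IsTree) {x v y1 y2 : V} (h1 : T.Adj v y1) (h2 : T.Adj v y2)
    (hd1 : T.dist x y1 + 1 = T.dist x v) (hd2 : T.dist x y2 + 1 = T.dist x v) : y1 = y2 := by
  have hc := hT.isConnected
  by_contra hne
  obtain ⟨p1, hp1, hl1⟩ := hc.exists_path_of_dist x y1
  obtain ⟨p2, hp2, hl2⟩ := hc.exists_path_of_dist x y2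
  have hv1 : v ∉ p1.support := by
    intro hv
    have h3 := dist_add_dist_le_of_mem hc p1 hv
    have h4 : T.dist v y1 = 1 := (SimpleGraph.dist_eq_one_iff_adj).2 h1
    omega
  have hv2 : v ∉ p2.support := by
    intro hv
    have h3 := dist_add_dist_le_of_mem hc p2 hv
    have h4 : T.dist v y2 = 1 := (SimpleGraph.dist_eq_one_iff_adj).2 h2
    omega
  have hq1 : ((Walk.cons h1 p1.reverse).reverse).IsPath :=
    (hp1.reverse.cons (by simpa using hv1)).reverse
  have hq2 : ((Walk.cons h2 p2.reverse).reverse).IsPath :=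
    (hp2.reverse.cons (by simpa using hv2)).reverse
  have heqw : (Walk.cons h1 p1.reverse).reverse = (Walk.cons h2 p2.reverse).reverse :=
    (hT.existsUnique_path x v).unique hq1 hq2
  have hy2 : y2 ∈ ((Walk.cons h1 p1.reverse).reverse).support := by
    rw [heqw]
    simp [Walk.support_reverse]
  rw [Walk.support_reverse, List.mem_reverse, Walk.support_cons] at hy2
  rcases List.mem_cons.mp hy2 with hy2 | hy2
  · exact h2.ne (by rw [hy2])
  · rw [Walk.support_reverse, List.mem_reverse] at hy2
    have h3 := dist_add_dist_le_of_mem hc p1 hy2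
    have h4 : T.dist y2 y1 ≠ 0 := by
      rw [SimpleGraph.dist_ne_zero_iff_ne_and_reachable]
      exact ⟨fun h => hne h.symm, hc y2 y1⟩
    omega

lemma step_par [DecidableEq V] (hT : T.IsTree) {r x v y : V}
    (hv : T.dist r v = T.dist r x + T.dist x v) (h : T.Adj v y)
    (hy : T.dist x y + 1 = T.dist x v) : T.dist r y = T.dist r x + T.dist x y := by
  have hc := hT.isConnected
  have tri : T.dist r y ≤ T.dist r x + T.dist x y := by
    have := hc.dist_triangle (u := r) (v := x) (w := y); omega
  rcases adj_dist_cases hT r h with hh | hh <;> omega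

lemma confine [DecidableEq V] (hT : T.IsTree) (r x : V) (w : ℕ → V) (p q : ℕ)
    (hwp : w p = x) (hadj : ∀ j, p ≤ j → j < q → T.Adj (w j) (w (j + 1)))
    (hge : ∀ j, p ≤ j → j ≤ q → T.dist r x ≤ T.dist r (w j)) :
    ∀ j, p ≤ j → j ≤ q → T.dist r (w j) = T.dist r x + T.dist x (w j) := by
  have hc := hT.isConnected
  intro j hpj
  induction j, hpj using Nat.le_induction with
  | base => intro _; rw [hwp]; simp
  | succ j hpj ih =>
    intro hjq
    have hinv := ih (by omega)
    have hadjj := hadj j hpj (by omega)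
    rcases adj_dist_cases hT x hadjj with hxy | hxy
    · -- dist x (w (j+1)) = dist x (w j) + 1
      rcases adj_dist_cases hT r hadjj with hry | hry
      · omega
      · -- dist r (w j) = dist r (w (j+1)) + 1 : bad case
        by_cases hxv : x = w j
        · have h0 : T.dist x (w j) = 0 := by rw [← hxv]; simp
          have := hge (j + 1) (by omega) hjq
          omega
        · obtain ⟨y', hy', hdy'⟩ := exists_closer_nbr hc hxv
          have hinv' : T.dist r y' = T.dist r x + T.dist x y' := step_par hT hinv hy' hdy'
          have : y' = w (j + 1) :=
            closer_nbr_unique hT (x := r) hy' hadjj (by omega) (by omega)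
          rw [this] at hdy'
          omega
    · exact step_par hT hinv hadjj hxy.symm

lemma no_min_walk [DecidableEq V] (hT : T.IsTree) (r : V) {x y : V} (hxy : x ≠ y)
    (hdy : T.dist r y = T.dist r x) (w : ℕ → V) (p q : ℕ) (hpq : p ≤ q)
    (hwp : w p = x) (hwq : w q = y)
    (hadj : ∀ j, p ≤ j → j < q → T.Adj (w j) (w (j + 1)))
    (hge : ∀ j, p ≤ j → j ≤ q → T.dist r x ≤ T.dist r (w j)) : False := by
  have h := confine hT r x w p q hwp hadj hge q hpq le_rfl
  rw [hwq, hdy] at h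
  have h0 : T.dist x y = 0 := by omega
  rw [SimpleGraph.Connected.dist_eq_zero_iff hT.isConnected] at h0
  · exact hxy h0

end tree

section helpers
variable {X α : Type*}

def seq2 (p0 p1 : X) : ℕ → X
  | 0 => p0
  | _ => p1

def seq4 (p0 p1 p2 p3 : X) : ℕ → X
  | 0 => p0
  | 1 => p1
  | 2 => p2
  | _ => p3

def seq6 (p0 p1 p2 p3 p4 p5 : X) : ℕ → X
  | 0 => p0
  | 1 => p1
  | 2 => p2
  | 3 => p3
  | 4 => p4
  | _ => p5

variable {p0 p1 p2 p3 p4 p5 : X}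

@[simp] lemma seq2_0 : seq2 p0 p1 0 = p0 := rfl
@[simp] lemma seq2_1 : seq2 p0 p1 1 = p1 := rfl
@[simp] lemma seq4_0 : seq4 p0 p1 p2 p3 0 = p0 := rfl
@[simp] lemma seq4_1 : seq4 p0 p1 p2 p3 1 = p1 := rfl
@[simp] lemma seq4_2 : seq4 p0 p1 p2 p3 2 = p2 := rfl
@[simp] lemma seq4_3 : seq4 p0 p1 p2 p3 3 = p3 := rfl
@[simp] lemma seq6_0 : seq6 p0 p1 p2 p3 p4 p5 0 = p0 := rfl
@[simp] lemma seq6_1 : seq6 p0 p1 p2 p3 p4 p5 1 = p1 := rfl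
@[simp] lemma seq6_2 : seq6 p0 p1 p2 p3 p4 p5 2 = p2 := rfl
@[simp] lemma seq6_3 : seq6 p0 p1 p2 p3 p4 p5 3 = p3 := rfl
@[simp] lemma seq6_4 : seq6 p0 p1 p2 p3 p4 p5 4 = p4 := rfl
@[simp] lemma seq6_5 : seq6 p0 p1 p2 p3 p4 p5 5 = p5 := rfl

variable {G : SimpleGraph X} {c : X → α}

lemma rep2 (h : IsNonrepetitive G c) {a b : X} (hadj : G.Adj a b) : c a ≠ c b := by
  intro hc
  have hne : a ≠ b := hadj.ne
  have hinj : ∀ i j, i < 2 * 1 → j < 2 * 1 → seq2 a b i = seq2 a b j → i = j := by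
    intro i j hi hj hfe
    interval_cases i <;> interval_cases j <;> simp_all
  have hadj2 : ∀ i, i + 1 < 2 * 1 → G.Adj (seq2 a b i) (seq2 a b (i + 1)) := by
    intro i hi
    have h0 : i = 0 := by omega
    subst h0; simpa using hadj
  have hrep : ∀ i, i < 1 → c (seq2 a b i) = c (seq2 a b (i + 1)) := by
    intro i hi
    have h0 : i = 0 := by omega
    subst h0; simpa using hc
  exact h 1 one_pos (seq2 a b) hinj hadj2 hrep

lemma rep4 (h : IsNonrepetitive G c) {p0 p1 p2 p3 : X}
    (h01 : G.Adj p0 p1) (h12 : G.Adj p1 p2) (h23 : G.Adj p2 p3)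
    (d02 : p0 ≠ p2) (d03 : p0 ≠ p3) (d13 : p1 ≠ p3)
    (c02 : c p0 = c p2) (c13 : c p1 = c p3) : False := by
  have d01 := h01.ne
  have d12 := h12.ne
  have d23 := h23.ne
  have hinj : ∀ i j, i < 2 * 2 → j < 2 * 2 →
      seq4 p0 p1 p2 p3 i = seq4 p0 p1 p2 p3 j → i = j := by
    intro i j hi hj hfe
    interval_cases i <;> interval_cases j <;> simp_all
  have hadj2 : ∀ i, i + 1 < 2 * 2 →
      G.Adj (seq4 p0 p1 p2 p3 i) (seq4 p0 p1 p2 p3 (i + 1)) := by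
    intro i hi
    have h0 : i < 3 := by omega
    interval_cases i
    · simpa using h01
    · simpa using h12
    · simpa using h23
  have hrep : ∀ i, i < 2 → c (seq4 p0 p1 p2 p3 i) = c (seq4 p0 p1 p2 p3 (i + 2)) := by
    intro i hi
    interval_cases i
    · simpa using c02
    · simpa using c13
  exact h 2 (by norm_num) (seq4 p0 p1 p2 p3) hinj hadj2 hrep

lemma rep6 (h : IsNonrepetitive G c) {p0 p1 p2 p3 p4 p5 : X}
    (h01 : G.Adj p0 p1) (h12 : G.Adj p1 p2) (h23 : G.Adj p2 p3)
    (h34 : G.Adj p3 p4) (h45 : G.Adj p4 p5)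
    (d02 : p0 ≠ p2) (d03 : p0 ≠ p3) (d04 : p0 ≠ p4) (d05 : p0 ≠ p5)
    (d13 : p1 ≠ p3) (d14 : p1 ≠ p4) (d15 : p1 ≠ p5)
    (d24 : p2 ≠ p4) (d25 : p2 ≠ p5) (d35 : p3 ≠ p5)
    (c03 : c p0 = c p3) (c14 : c p1 = c p4) (c25 : c p2 = c p5) : False := by
  have d01 := h01.ne
  have d12 := h12.ne
  have d23 := h23.ne
  have d34 := h34.ne
  have d45 := h45.ne
  have hinj : ∀ i j, i < 2 * 3 → j < 2 * 3 →
      seq6 p0 p1 p2 p3 p4 p5 i = seq6 p0 p1 p2 p3 p4 p5 j → i = j := by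
    intro i j hi hj hfe
    interval_cases i <;> interval_cases j <;> simp_all
  have hadj2 : ∀ i, i + 1 < 2 * 3 →
      G.Adj (seq6 p0 p1 p2 p3 p4 p5 i) (seq6 p0 p1 p2 p3 p4 p5 (i + 1)) := by
    intro i hi
    have h0 : i < 5 := by omega
    interval_cases i
    · simpa using h01
    · simpa using h12
    · simpa using h23
    · simpa using h34
    · simpa using h45
  have hrep : ∀ i, i < 3 →
      c (seq6 p0 p1 p2 p3 p4 p5 i) = c (seq6 p0 p1 p2 p3 p4 p5 (i + 3)) := by
    intro i hi
    interval_cases i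
    · simpa using c03
    · simpa using c14
    · simpa using c25
  exact h 3 (by norm_num) (seq6 p0 p1 p2 p3 p4 p5) hinj hadj2 hrep

end helpers

section tree2
variable {V : Type*} {T : SimpleGraph V}
lemma decode {k m1 m2 a b : ℕ} (ha : a < k) (hb : b < k)
    (h : m1 * k + a = m2 * k + b) : m1 = m2 ∧ a = b := by
  have h1 : m1 = m2 := by
    by_contra hne
    rcases Nat.lt_or_ge m1 m2 with hlt | hge
    · have h2 : (m1 + 1) * k ≤ m2 * k := Nat.mul_le_mul_right k hlt
      rw [add_mul, one_mul] at h2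
      linarith
    · have hlt : m2 < m1 := by omega
      have h2 : (m2 + 1) * k ≤ m1 * k := Nat.mul_le_mul_right k hlt
      rw [add_mul, one_mul] at h2
      linarith
  subst h1
  exact ⟨rfl, by omega⟩

lemma upper [DecidableEq V] (hT : T.IsTree) (r : V) (hdepth : ∀ v : V, T.dist r v ≤ 6)
    (k : ℕ) :
    ∃ c : V × Fin k → Fin (4 * k), IsNonrepetitive (lexProd T (⊥ : SimpleGraph (Fin k))) c := by
  have hcol : ∀ vi : V × Fin k, (T.dist r vi.1 % 4) * k + (vi.2 : ℕ) < 4 * k := by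
    intro vi
    have h4 : T.dist r vi.1 % 4 ≤ 3 := by omega
    have h5 := Nat.mul_le_mul_right k h4
    have := vi.2.2
    omega
  refine ⟨fun vi => ⟨(T.dist r vi.1 % 4) * k + (vi.2 : ℕ), hcol vi⟩, ?_⟩
  intro l hl f hinj hadj hrep
  set d : ℕ → ℕ := fun i => T.dist r (f i).1 with hd
  have hTadj : ∀ i, i + 1 < 2 * l → T.Adj (f i).1 (f (i + 1)).1 := by
    intro i hi
    rcases hadj i hi with h | ⟨_, h⟩
    · exact h
    · exact absurd h (by simp)
  have hstep : ∀ i, i + 1 < 2 * l → d (i + 1) = d i + 1 ∨ d i = d (i + 1) + 1 := by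
    intro i hi
    exact adj_dist_cases hT r (hTadj i hi)
  have hdec : ∀ i, i < l → d i % 4 = d (i + l) % 4 ∧ ((f i).2 : ℕ) = ((f (i + l)).2 : ℕ) := by
    intro i hi
    have hc := hrep i hi
    have hv := congrArg Fin.val hc
    exact decode (f i).2.2 (f (i + l)).2.2 hv
  have hfst : ∀ i, i < l → (f i).1 ≠ (f (i + l)).1 := by
    intro i hi heq
    have h2 : (f i).2 = (f (i + l)).2 := Fin.ext (hdec i hi).2
    have : f i = f (i + l) := Prod.ext heq h2
    have := hinj i (i + l) (by omega) (by omega) this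
    omega
  have hdia : ∀ i, i < l → d (i + l) = d i + 4 ∨ d (i + l) = d i ∨ d i = d (i + l) + 4 := by
    intro i hi
    have h1 := (hdec i hi).1
    have h2 : d i ≤ 6 := hdepth _
    have h3 : d (i + l) ≤ 6 := hdepth _
    omega
  -- the difference is constant
  have hconst : ∀ i, i < l → (d (i + l) = d i + 4 ↔ d l = d 0 + 4) ∧
      (d i = d (i + l) + 4 ↔ d 0 = d l + 4) := by
    intro i
    induction i with
    | zero => intro _; simp
    | succ i ih =>
      intro hi
      have hih := ih (by omega)
      have h1 := hdia i (by omega)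
      have h2 := hdia (i + 1) hi
      have h3 := hstep i (by omega)
      have h4 := hstep (i + l) (by omega)
      have h5 : i + 1 + l = i + l + 1 := by omega
      rw [h5] at h2 ⊢
      omega
  have hper : ∀ i, i < l → d (i + l) = d i := by
    intro i hi
    rcases hdia i hi with h | h | h
    · -- diff = +4 everywhere
      exfalso
      have h0 : d l = d 0 + 4 := by
        have := (hconst i hi).1
        omega
      have hle : ∀ j, j < l → d j ≤ 2 := by
        intro j hj
        have hj1 := hdia j hj
        have hj2 := (hconst j hj)
        have : d (j + l) ≤ 6 := hdepth _
        omega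
      have hseam := hstep (l - 1) (by omega)
      rw [show l - 1 + 1 = l by omega] at hseam
      have h6 := hle (l - 1) (by omega)
      have h7 := hle 0 (by omega)
      omega
    · exact h
    · exfalso
      have h0 : d 0 = d l + 4 := by
        have := (hconst i hi).2
        omega
      have hge4 : ∀ j, j < l → 4 ≤ d j := by
        intro j hj
        have hj1 := hdia j hj
        have hj2 := (hconst j hj)
        omega
      have hseam := hstep (l - 1) (by omega)
      rw [show l - 1 + 1 = l by omega] at hseam
      have h6 := hge4 (l - 1) (by omega)
      have h7 := hge4 0 (by omega)
      have h8 : d 0 ≤ 6 := hdepth _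
      omega
  -- minimum
  have hne : (Finset.range (2 * l)).Nonempty := by
    refine ⟨0, ?_⟩; simp; omega
  obtain ⟨i0, hi0mem, hi0⟩ := Finset.exists_mem_eq_inf' hne d
  set m := (Finset.range (2 * l)).inf' hne d with hm
  have hmin : ∀ j, j < 2 * l → m ≤ d j := fun j hj =>
    Finset.inf'_le d (Finset.mem_range.mpr hj)
  rw [Finset.mem_range] at hi0mem
  have hex : ∃ p, p < l ∧ d p = m := by
    by_cases hc0 : i0 < l
    · exact ⟨i0, hc0, hi0.symm⟩
    · refine ⟨i0 - l, by omega, ?_⟩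
      have h5 := hper (i0 - l) (by omega)
      rw [show i0 - l + l = i0 by omega] at h5
      rw [← h5, ← hi0]
  obtain ⟨p, hpl, hdp⟩ := hex
  have hdq : d (p + l) = m := by rw [hper p hpl, hdp]
  have hdp' : T.dist r (f p).1 = m := hdp
  have hdq' : T.dist r (f (p + l)).1 = m := hdq
  have hmin' : ∀ j, j < 2 * l → m ≤ T.dist r (f j).1 := hmin
  exact no_min_walk hT r (hfst p hpl)
    (by rw [hdq', hdp'])
    (fun j => (f j).1) p (p + l) (by omega) rfl rfl
    (fun j hj1 hj2 => hTadj j (by omega))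
    (fun j hj1 hj2 => by
      show T.dist r (f p).1 ≤ T.dist r (f j).1
      have := hmin' j (by omega)
      omega)

end tree2


section layer
variable {V : Type*} {k n : ℕ}

/-- The set of colors on the layer of `v`. -/
def layerS (c : V × Fin k → Fin n) (v : V) : Finset (Fin n) :=
  Finset.image (fun i => c (v, i)) Finset.univ

lemma mem_layerS {c : V × Fin k → Fin n} {v : V} {γ : Fin n} :
    γ ∈ layerS c v ↔ ∃ i, c (v, i) = γ := by simp [layerS]

lemma card_layerS_le (c : V × Fin k → Fin n) (v : V) : (layerS c v).card ≤ k := by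
  refine (Finset.card_image_le).trans ?_
  simp

lemma exists_rep_of_card_lt {c : V × Fin k → Fin n} {v : V} (h : (layerS c v).card < k) :
    ∃ i j : Fin k, i ≠ j ∧ c (v, i) = c (v, j) := by
  by_contra h2
  push_neg at h2
  have hinj : Function.Injective (fun i : Fin k => c (v, i)) := by
    intro i j hij
    by_contra hne
    exact h2 i j hne hij
  rw [layerS, Finset.card_image_of_injective _ hinj] at h
  simp at h

end layer

section counting
variable {n k : ℕ} {ι : Type*} [DecidableEq ι]

lemma two_share (F : Finset ι) (Sf : ι → Finset (Fin n)) (pool : Finset (Fin n))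
    (hsub : ∀ v ∈ F, Sf v ⊆ pool) (hcard : ∀ v ∈ F, (Sf v).card = k)
    (hpool : pool.card < F.card * k) :
    ∃ u ∈ F, ∃ u' ∈ F, u ≠ u' ∧ ((Sf u) ∩ (Sf u')).Nonempty := by
  by_contra h
  push_neg at h
  have hdisj : ∀ u ∈ F, ∀ u' ∈ F, u ≠ u' → Disjoint (Sf u) (Sf u') := by
    intro u hu u' hu' hne
    have h3 := h u hu u' hu' hne
    rwa [← Finset.disjoint_iff_inter_eq_empty] at h3
  have h1 : (F.biUnion Sf).card = ∑ v ∈ F, (Sf v).card := Finset.card_biUnion hdisj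
  have h2 : ∑ v ∈ F, (Sf v).card = F.card * k := Finset.sum_const_nat hcard
  have h3 : F.biUnion Sf ⊆ pool := Finset.biUnion_subset.mpr hsub
  have h4 := Finset.card_le_card h3
  omega

lemma pair_share (s t pool : Finset (Fin n)) (hs : s ⊆ pool) (ht : t ⊆ pool)
    (hsc : s.card = k) (htc : t.card = k) (hpool : pool.card < 2 * k) : (s ∩ t).Nonempty := by
  by_contra h
  rw [Finset.not_nonempty_iff_eq_empty, ← Finset.disjoint_iff_inter_eq_empty] at h
  have h1 := Finset.card_union_of_disjoint h
  have h2 := Finset.card_le_card (Finset.union_subset hs ht)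
  omega

end counting

section child
variable {V : Type*} [Fintype V] [DecidableEq V] (T : SimpleGraph V) [DecidableRel T.Adj] (r : V)

/-- The children of `v` in the tree rooted at `r`. -/
noncomputable def childSet (v : V) : Finset V :=
  (T.neighborFinset v).filter (fun u => T.dist r u = T.dist r v + 1)

variable {T r}

lemma mem_childSet {v u : V} :
    u ∈ childSet T r v ↔ T.Adj v u ∧ T.dist r u = T.dist r v + 1 := by
  simp [childSet, SimpleGraph.mem_neighborFinset]

lemma childSet_root_card (hT : T.IsTree) (hroot : T.degree r = 4) :
    (childSet T r r).card = 4 := by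
  have h1 : childSet T r r = T.neighborFinset r := by
    ext u
    simp only [mem_childSet, SimpleGraph.mem_neighborFinset]
    refine ⟨fun h => h.1, fun h => ⟨h, ?_⟩⟩
    rcases adj_dist_cases hT r h with h2 | h2
    · simpa using h2
    · simp [SimpleGraph.dist_self] at h2
  rw [h1, SimpleGraph.card_neighborFinset_eq_degree, hroot]

lemma childSet_card (hT : T.IsTree) {v : V} (hne : v ≠ r) (hdeg : T.degree v = 4) :
    (childSet T r v).card = 3 := by
  obtain ⟨y, hy, hyd⟩ := exists_closer_nbr hT.isConnected (fun h => hne h.symm)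
  have h1 : childSet T r v = (T.neighborFinset v).erase y := by
    ext u
    simp only [mem_childSet, SimpleGraph.mem_neighborFinset, Finset.mem_erase]
    constructor
    · rintro ⟨hadj, hdist⟩
      exact ⟨fun he => by subst he; omega, hadj⟩
    · rintro ⟨hne2, hadj⟩
      refine ⟨hadj, ?_⟩
      rcases adj_dist_cases hT r hadj with h2 | h2
      · exact h2
      · exact absurd (closer_nbr_unique hT (x := r) hadj hy (by omega) hyd) hne2
  rw [h1, Finset.card_erase_of_mem (by rwa [SimpleGraph.mem_neighborFinset]),
    SimpleGraph.card_neighborFinset_eq_degree, hdeg]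

end child

lemma lower {V : Type*} [Fintype V] [DecidableEq V] {T : SimpleGraph V} [DecidableRel T.Adj]
    (hT : T.IsTree) (r : V)
    (hroot : T.degree r = 4)
    (hinternal : ∀ v : V, v ≠ r → T.dist r v < 6 → T.degree v = 4)
    (k : ℕ) (hk : 1 ≤ k) (n : ℕ)
    (c : V × Fin k → Fin n)
    (hnr : IsNonrepetitive (lexProd T (⊥ : SimpleGraph (Fin k))) c) : 4 * k ≤ n := by
  by_contra hn
  push_neg at hn
  have hcon := hT.isConnected
  have hwit : ∀ {v : V} {γ : Fin n}, γ ∈ layerS c v → ∃ i, c (v, i) = γ := fun h => mem_layerS.mp h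
  have pne : ∀ {a b : V} {i j : Fin k}, a ≠ b → (a, i) ≠ (b, j) :=
    fun h he => h (congrArg Prod.fst he)
  have hde : ∀ (a b : V), T.dist r a ≠ T.dist r b → a ≠ b := fun a b h he => h (by rw [he])
  -- (A) layers of adjacent vertices are disjoint
  have hA : ∀ u v : V, T.Adj u v → Disjoint (layerS c u) (layerS c v) := by
    intro u v huv
    rw [Finset.disjoint_left]
    intro γ hu hv
    obtain ⟨a, ha⟩ := hwit hu
    obtain ⟨b, hb⟩ := hwit hv
    exact rep2 hnr (show (lexProd T ⊥).Adj (u, a) (v, b) from Or.inl huv) (ha.trans hb.symm)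
  -- (B) a neighbor of a non-rainbow vertex is rainbow
  have hB : ∀ u v : V, T.Adj u v → (layerS c u).card < k → (layerS c v).card = k := by
    intro u v huv hu
    by_contra hv'
    have hv : (layerS c v).card < k := lt_of_le_of_ne (card_layerS_le c v) hv'
    obtain ⟨i, j, hij, hcu⟩ := exists_rep_of_card_lt hu
    obtain ⟨b1, b2, hb, hcv⟩ := exists_rep_of_card_lt hv
    exact rep4 hnr (p0 := (u, i)) (p1 := (v, b1)) (p2 := (u, j)) (p3 := (v, b2))
      (Or.inl huv) (Or.inl huv.symm) (Or.inl huv)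
      (fun h => hij (congrArg Prod.snd h)) (pne huv.ne) (fun h => hb (congrArg Prod.snd h))
      hcu hcv
  -- (D) neighbors of a non-rainbow vertex have pairwise disjoint layers
  have hD : ∀ v u w : V, T.Adj v u → T.Adj v w → u ≠ w → (layerS c v).card < k →
      Disjoint (layerS c u) (layerS c w) := by
    intro v u w hvu hvw huw hv
    obtain ⟨b1, b2, hb, hcv⟩ := exists_rep_of_card_lt hv
    rw [Finset.disjoint_left]
    intro γ hu hw
    obtain ⟨a, ha⟩ := hwit hu
    obtain ⟨e, he⟩ := hwit hw
    exact rep4 hnr (p0 := (u, a)) (p1 := (v, b1)) (p2 := (w, e)) (p3 := (v, b2))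
      (Or.inl hvu.symm) (Or.inl hvw) (Or.inl hvw.symm)
      (pne huw) (pne hvu.ne') (fun h => hb (congrArg Prod.snd h))
      (ha.trans he.symm) hcv
  -- every degree-4 vertex is rainbow
  have hR : ∀ v : V, T.degree v = 4 → (layerS c v).card = k := by
    intro v hdeg
    by_contra hlt'
    have hlt : (layerS c v).card < k := lt_of_le_of_ne (card_layerS_le c v) hlt'
    have hnb : ∀ u ∈ T.neighborFinset v, (layerS c u).card = k := by
      intro u hu
      exact hB v u ((SimpleGraph.mem_neighborFinset T v u).mp hu) hlt
    have hdisj : ∀ u ∈ T.neighborFinset v, ∀ w ∈ T.neighborFinset v, u ≠ w →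
        Disjoint (layerS c u) (layerS c w) := by
      intro u hu w hw huw
      exact hD v u w ((SimpleGraph.mem_neighborFinset T v u).mp hu)
        ((SimpleGraph.mem_neighborFinset T v w).mp hw) huw hlt
    have h1 : ((T.neighborFinset v).biUnion (layerS c)).card
        = ∑ u ∈ T.neighborFinset v, (layerS c u).card := Finset.card_biUnion hdisj
    have h2 : ∑ u ∈ T.neighborFinset v, (layerS c u).card = 4 * k := by
      rw [Finset.sum_const_nat hnb, SimpleGraph.card_neighborFinset_eq_degree, hdeg]
    have h3 := Finset.card_le_univ ((T.neighborFinset v).biUnion (layerS c))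
    rw [Fintype.card_fin] at h3
    omega
  -- SL: sibling lemma
  have hSL : ∀ p u u' x : V, T.Adj p u → T.Adj p u' → u ≠ u' →
      ((layerS c u) ∩ (layerS c u')).Nonempty → T.Adj u x → x ≠ p → x ≠ u' →
      Disjoint (layerS c x) (layerS c p) := by
    intro p u u' x hpu hpu' huu' hsh hux hxp hxu'
    obtain ⟨γ, hγ⟩ := hsh
    rw [Finset.mem_inter] at hγ
    obtain ⟨b, hb⟩ := hwit hγ.1
    obtain ⟨b', hb'⟩ := hwit hγ.2
    rw [Finset.disjoint_left]
    intro ξ hx hp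
    obtain ⟨a, ha⟩ := hwit hx
    obtain ⟨e, he⟩ := hwit hp
    exact rep4 hnr (p0 := (x, a)) (p1 := (u, b)) (p2 := (p, e)) (p3 := (u', b'))
      (Or.inl hux.symm) (Or.inl hpu.symm) (Or.inl hpu')
      (pne hxp) (pne hxu') (pne huu')
      (ha.trans he.symm) (hb.trans hb'.symm)
  -- basic structure facts
  have hdrr : T.dist r r = 0 := SimpleGraph.dist_self
  have huniv : (Finset.univ : Finset (Fin n)).card = n := by
    rw [Finset.card_univ, Fintype.card_fin]
  -- root is rainbow
  have hRr : (layerS c r).card = k := hR r hroot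
  -- children of the root
  have hCr := childSet_root_card hT hroot
  -- vertices at depth 1..5 are rainbow, and have 3 children each (depth 1..4)
  have hdeg' : ∀ v : V, T.dist r v ≠ 0 → T.dist r v < 6 → T.degree v = 4 := by
    intro v h0 h6
    refine hinternal v (fun he => h0 (by rw [he, hdrr])) h6
  -- pigeonhole at the root
  have hsub0 : ∀ u ∈ childSet T r r, layerS c u ⊆ Finset.univ \ layerS c r := by
    intro u hu
    rw [Finset.subset_sdiff]
    exact ⟨Finset.subset_univ _, (hA r u (mem_childSet.mp hu).1).symm⟩
  have hrain1 : ∀ u ∈ childSet T r r, (layerS c u).card = k := by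
    intro u hu
    obtain ⟨hadj, hdist⟩ := mem_childSet.mp hu
    exact hR u (hdeg' u (by omega) (by omega))
  have hpool0 : (Finset.univ \ layerS c r).card < (childSet T r r).card * k := by
    rw [Finset.card_sdiff_of_subset (Finset.subset_univ _), huniv, hRr, hCr]
    omega
  obtain ⟨v1, hv1m, u', hu'm, hv1u', hsh1⟩ :=
    two_share (childSet T r r) (layerS c) (Finset.univ \ layerS c r) hsub0 hrain1 hpool0
  obtain ⟨hv1adj, hv1d⟩ := mem_childSet.mp hv1m
  obtain ⟨hu'adj, hu'd⟩ := mem_childSet.mp hu'm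
  rw [hdrr] at hv1d hu'd
  have hv1r : (layerS c v1).card = k := hrain1 v1 hv1m
  -- generic level step facts
  -- level 1 : children of v1
  have hC1 := childSet_card hT (hde v1 r (by omega)) (hdeg' v1 (by omega) (by omega))
  have hch1 : ∀ x ∈ childSet T r v1, T.Adj v1 x ∧ T.dist r x = 2 := by
    intro x hx
    obtain ⟨hadj, hdist⟩ := mem_childSet.mp hx
    exact ⟨hadj, by omega⟩
  have hch1r : ∀ x ∈ childSet T r v1, (layerS c x).card = k := by
    intro x hx
    have := (hch1 x hx).2
    exact hR x (hdeg' x (by omega) (by omega))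
  have hch1dr : ∀ x ∈ childSet T r v1, Disjoint (layerS c x) (layerS c r) := by
    intro x hx
    obtain ⟨hadj, hdist⟩ := hch1 x hx
    exact hSL r v1 u' x hv1adj hu'adj hv1u' hsh1 hadj
      (hde x r (by omega)) (hde x u' (by omega))
  have hsub1 : ∀ x ∈ childSet T r v1, layerS c x ⊆ Finset.univ \ (layerS c r ∪ layerS c v1) := by
    intro x hx
    rw [Finset.subset_sdiff, Finset.disjoint_union_right]
    exact ⟨Finset.subset_univ _, hch1dr x hx, (hA v1 x (hch1 x hx).1).symm⟩
  have hpoolc1 : (Finset.univ \ (layerS c r ∪ layerS c v1)).card = n - 2 * k := by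
    rw [Finset.card_sdiff_of_subset (Finset.subset_univ _), huniv,
      Finset.card_union_of_disjoint (hA r v1 hv1adj), hRr, hv1r]
    omega
  obtain ⟨v2, hv2m, x', hx'm, hv2x', hsh2⟩ :=
    two_share (childSet T r v1) (layerS c) (Finset.univ \ (layerS c r ∪ layerS c v1)) hsub1 hch1r
      (by rw [hpoolc1, hC1]; omega)
  obtain ⟨hv2adj, hv2d⟩ := hch1 v2 hv2m
  have hv2r := hch1r v2 hv2m
  have hv2_disj_r : Disjoint (layerS c v2) (layerS c r) := hch1dr v2 hv2m
  -- level 2 : children of v2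
  have hC2 := childSet_card hT (hde v2 r (by omega)) (hdeg' v2 (by omega) (by omega))
  have hch2 : ∀ x ∈ childSet T r v2, T.Adj v2 x ∧ T.dist r x = 3 := by
    intro x hx
    obtain ⟨hadj, hdist⟩ := mem_childSet.mp hx
    exact ⟨hadj, by omega⟩
  have hch2r : ∀ x ∈ childSet T r v2, (layerS c x).card = k := by
    intro x hx
    have := (hch2 x hx).2
    exact hR x (hdeg' x (by omega) (by omega))
  have hch2dv1 : ∀ x ∈ childSet T r v2, Disjoint (layerS c x) (layerS c v1) := by
    intro x hx
    obtain ⟨hadj, hdist⟩ := hch2 x hx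
    have hx'd := (hch1 x' hx'm).2
    exact hSL v1 v2 x' x hv2adj (hch1 x' hx'm).1 hv2x' hsh2 hadj
      (hde x v1 (by omega)) (hde x x' (by omega))
  have hsub2 : ∀ x ∈ childSet T r v2, layerS c x ⊆ Finset.univ \ (layerS c v1 ∪ layerS c v2) := by
    intro x hx
    rw [Finset.subset_sdiff, Finset.disjoint_union_right]
    exact ⟨Finset.subset_univ _, hch2dv1 x hx, (hA v2 x (hch2 x hx).1).symm⟩
  have hpoolc2 : (Finset.univ \ (layerS c v1 ∪ layerS c v2)).card = n - 2 * k := by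
    rw [Finset.card_sdiff_of_subset (Finset.subset_univ _), huniv,
      Finset.card_union_of_disjoint (hA v1 v2 hv2adj), hv1r, hv2r]
    omega
  have hrsub2 : layerS c r ⊆ Finset.univ \ (layerS c v1 ∪ layerS c v2) := by
    rw [Finset.subset_sdiff, Finset.disjoint_union_right]
    exact ⟨Finset.subset_univ _, hA r v1 hv1adj, hv2_disj_r.symm⟩
  have hch2shr : ∀ x ∈ childSet T r v2, ((layerS c x) ∩ (layerS c r)).Nonempty := by
    intro x hx
    exact pair_share _ _ _ (hsub2 x hx) hrsub2 (hch2r x hx) hRr (by omega)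
  obtain ⟨v3, hv3m, w', hw'm, hv3w', hsh3⟩ :=
    two_share (childSet T r v2) (layerS c) (Finset.univ \ (layerS c v1 ∪ layerS c v2)) hsub2 hch2r
      (by rw [hpoolc2, hC2]; omega)
  obtain ⟨hv3adj, hv3d⟩ := hch2 v3 hv3m
  have hv3r := hch2r v3 hv3m
  have hv3_disj_v1 : Disjoint (layerS c v3) (layerS c v1) := hch2dv1 v3 hv3m
  have hv3shr : ((layerS c v3) ∩ (layerS c r)).Nonempty := hch2shr v3 hv3m
  -- level 3 : children of v3
  have hC3 := childSet_card hT (hde v3 r (by omega)) (hdeg' v3 (by omega) (by omega))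
  have hch3 : ∀ x ∈ childSet T r v3, T.Adj v3 x ∧ T.dist r x = 4 := by
    intro x hx
    obtain ⟨hadj, hdist⟩ := mem_childSet.mp hx
    exact ⟨hadj, by omega⟩
  have hch3r : ∀ x ∈ childSet T r v3, (layerS c x).card = k := by
    intro x hx
    have := (hch3 x hx).2
    exact hR x (hdeg' x (by omega) (by omega))
  have hch3dv2 : ∀ x ∈ childSet T r v3, Disjoint (layerS c x) (layerS c v2) := by
    intro x hx
    obtain ⟨hadj, hdist⟩ := hch3 x hx
    have hw'd := (hch2 w' hw'm).2
    exact hSL v2 v3 w' x hv3adj (hch2 w' hw'm).1 hv3w' hsh3 hadj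
      (hde x v2 (by omega)) (hde x w' (by omega))
  have hsub3 : ∀ x ∈ childSet T r v3, layerS c x ⊆ Finset.univ \ (layerS c v2 ∪ layerS c v3) := by
    intro x hx
    rw [Finset.subset_sdiff, Finset.disjoint_union_right]
    exact ⟨Finset.subset_univ _, hch3dv2 x hx, (hA v3 x (hch3 x hx).1).symm⟩
  have hpoolc3 : (Finset.univ \ (layerS c v2 ∪ layerS c v3)).card = n - 2 * k := by
    rw [Finset.card_sdiff_of_subset (Finset.subset_univ _), huniv,
      Finset.card_union_of_disjoint (hA v2 v3 hv3adj), hv2r, hv3r]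
    omega
  have hv1sub3 : layerS c v1 ⊆ Finset.univ \ (layerS c v2 ∪ layerS c v3) := by
    rw [Finset.subset_sdiff, Finset.disjoint_union_right]
    exact ⟨Finset.subset_univ _, hA v1 v2 hv2adj, hv3_disj_v1.symm⟩
  have hch3shv1 : ∀ x ∈ childSet T r v3, ((layerS c x) ∩ (layerS c v1)).Nonempty := by
    intro x hx
    exact pair_share _ _ _ (hsub3 x hx) hv1sub3 (hch3r x hx) hv1r (by omega)
  obtain ⟨v4, hv4m, y', hy'm, hv4y', hsh4⟩ :=
    two_share (childSet T r v3) (layerS c) (Finset.univ \ (layerS c v2 ∪ layerS c v3)) hsub3 hch3r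
      (by rw [hpoolc3, hC3]; omega)
  obtain ⟨hv4adj, hv4d⟩ := hch3 v4 hv4m
  have hv4r := hch3r v4 hv4m
  have hv4_disj_v2 : Disjoint (layerS c v4) (layerS c v2) := hch3dv2 v4 hv4m
  have hv4shv1 : ((layerS c v4) ∩ (layerS c v1)).Nonempty := hch3shv1 v4 hv4m
  -- level 4 : children of v4
  have hC4 := childSet_card hT (hde v4 r (by omega)) (hdeg' v4 (by omega) (by omega))
  have hch4 : ∀ x ∈ childSet T r v4, T.Adj v4 x ∧ T.dist r x = 5 := by
    intro x hx
    obtain ⟨hadj, hdist⟩ := mem_childSet.mp hx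
    exact ⟨hadj, by omega⟩
  have hch4r : ∀ x ∈ childSet T r v4, (layerS c x).card = k := by
    intro x hx
    have := (hch4 x hx).2
    exact hR x (hdeg' x (by omega) (by omega))
  have hch4dv3 : ∀ x ∈ childSet T r v4, Disjoint (layerS c x) (layerS c v3) := by
    intro x hx
    obtain ⟨hadj, hdist⟩ := hch4 x hx
    have hy'd := (hch3 y' hy'm).2
    exact hSL v3 v4 y' x hv4adj (hch3 y' hy'm).1 hv4y' hsh4 hadj
      (hde x v3 (by omega)) (hde x y' (by omega))
  have hsub4 : ∀ x ∈ childSet T r v4, layerS c x ⊆ Finset.univ \ (layerS c v3 ∪ layerS c v4) := by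
    intro x hx
    rw [Finset.subset_sdiff, Finset.disjoint_union_right]
    exact ⟨Finset.subset_univ _, hch4dv3 x hx, (hA v4 x (hch4 x hx).1).symm⟩
  have hpoolc4 : (Finset.univ \ (layerS c v3 ∪ layerS c v4)).card = n - 2 * k := by
    rw [Finset.card_sdiff_of_subset (Finset.subset_univ _), huniv,
      Finset.card_union_of_disjoint (hA v3 v4 hv4adj), hv3r, hv4r]
    omega
  have hv2sub4 : layerS c v2 ⊆ Finset.univ \ (layerS c v3 ∪ layerS c v4) := by
    rw [Finset.subset_sdiff, Finset.disjoint_union_right]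
    exact ⟨Finset.subset_univ _, hA v2 v3 hv3adj, hv4_disj_v2.symm⟩
  have hch4shv2 : ∀ x ∈ childSet T r v4, ((layerS c x) ∩ (layerS c v2)).Nonempty := by
    intro x hx
    exact pair_share _ _ _ (hsub4 x hx) hv2sub4 (hch4r x hx) hv2r (by omega)
  -- pick any child of v4
  have hC4pos : (childSet T r v4).Nonempty := by
    rw [← Finset.card_pos, hC4]; omega
  obtain ⟨v5, hv5m⟩ := hC4pos
  obtain ⟨hv5adj, hv5d⟩ := hch4 v5 hv5m
  have hv5shv2 : ((layerS c v5) ∩ (layerS c v2)).Nonempty := hch4shv2 v5 hv5m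
  -- final contradiction : repetitive path of length 6
  obtain ⟨γ3, hγ3⟩ := hv3shr
  rw [Finset.mem_inter] at hγ3
  obtain ⟨a3, ha3⟩ := hwit hγ3.1
  obtain ⟨a0, ha0⟩ := hwit hγ3.2
  obtain ⟨γ4, hγ4⟩ := hv4shv1
  rw [Finset.mem_inter] at hγ4
  obtain ⟨a4, ha4⟩ := hwit hγ4.1
  obtain ⟨a1, ha1⟩ := hwit hγ4.2
  obtain ⟨γ5, hγ5⟩ := hv5shv2
  rw [Finset.mem_inter] at hγ5
  obtain ⟨a5, ha5⟩ := hwit hγ5.1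
  obtain ⟨a2, ha2⟩ := hwit hγ5.2
  exact rep6 hnr (p0 := (r, a0)) (p1 := (v1, a1)) (p2 := (v2, a2)) (p3 := (v3, a3))
    (p4 := (v4, a4)) (p5 := (v5, a5))
    (Or.inl hv1adj) (Or.inl hv2adj) (Or.inl hv3adj) (Or.inl hv4adj) (Or.inl hv5adj)
    (pne (hde r v2 (by omega))) (pne (hde r v3 (by omega))) (pne (hde r v4 (by omega)))
    (pne (hde r v5 (by omega)))
    (pne (hde v1 v3 (by omega))) (pne (hde v1 v4 (by omega))) (pne (hde v1 v5 (by omega)))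
    (pne (hde v2 v4 (by omega))) (pne (hde v2 v5 (by omega))) (pne (hde v3 v5 (by omega)))
    (ha0.trans ha3.symm) (ha1.trans ha4.symm) (ha2.trans ha5.symm)

end Stmt7Aux

/-- For `T_{4,7}`, the tree whose root has 4 children, every other non-leaf vertex has
degree 4, and all leaves are at distance 6 from the root, `π(T_{4,7}[E_k]) = 4k`. -/
theorem stmt_7 {V : Type*} [Fintype V] (T : SimpleGraph V) [DecidableRel T.Adj]
    (r : V) (hT : T.IsTree)
    (hroot : T.degree r = 4)
    (hdepth : ∀ v : V, T.dist r v ≤ 6)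
    (hinternal : ∀ v : V, v ≠ r → T.dist r v < 6 → T.degree v = 4)
    (hleaf : ∀ v : V, T.dist r v = 6 → T.degree v = 1)
    (k : ℕ) (hk : 1 ≤ k) :
    thueNumber (lexProd T (⊥ : SimpleGraph (Fin k))) = 4 * k := by
  letI : DecidableEq V := Classical.decEq V
  apply le_antisymm
  · obtain ⟨c, hc⟩ := Stmt7Aux.upper hT r hdepth k
    exact Nat.sInf_le ⟨c, hc⟩
  · refine le_csInf ?_ ?_
    · obtain ⟨c, hc⟩ := Stmt7Aux.upper hT r hdepth k
      exact ⟨4 * k, c, hc⟩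
    · rintro n ⟨c, hc⟩
      exact Stmt7Aux.lower hT r hroot hinternal k hk n c hc
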